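/- Let f, g : {0,1}^n → ℝ with f ≥ 0 not identically zero, g symmetric, τ > ρ, g ∗ f ≥ τ f pointwise, and ĝ(S) ≤ ρ for |S| ≥ d. Define λ_i = (Σ_{|x|=i} f̂(x)^2)/⟨f,f⟩ for 0 ≤ i ≤ n, and let P(i) denote the common value ĝ(y) for |y| = i. Then (λ_0,…,λ_n) is a probability vector and Σ_{i=0}^n λ_i P(i) ≥ τ > ρ ≥ P(d). -/

import Mathlib

open Finset

namespace Cube

attribute [local instance] Classical.propDecidable

/-- Hamming weight of a point of the Boolean cube. -/
def wt {n : ℕ} (x : Fin n → Bool) : ℕ := (univ.filter fun i => x i = true).card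

/-- Hamming distance. -/
def hdist {n : ℕ} (x y : Fin n → Bool) : ℕ := (univ.filter fun i => x i ≠ y i).card

/-- Coordinatewise addition mod 2 (XOR). -/
def xadd {n : ℕ} (x y : Fin n → Bool) : Fin n → Bool := fun i => x i != y i

/-- Walsh character `W_S(x) = (-1)^{⟨S,x⟩}`. -/
noncomputable def W {n : ℕ} (S x : Fin n → Bool) : ℝ :=
  (-1 : ℝ) ^ (univ.filter fun i => S i = true ∧ x i = true).card

/-- Fourier transform `f̂(S) = 2^{-n} ∑_x f(x) W_S(x)`. -/
noncomputable def ft {n : ℕ} (f : (Fin n → Bool) → ℝ) : (Fin n → Bool) → ℝ :=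
  fun S => (∑ x, f x * W S x) / 2 ^ n

/-- Convolution `(f ∗ g)(x) = 2^{-n} ∑_y f(y) g(x+y)`. -/
noncomputable def conv {n : ℕ} (f g : (Fin n → Bool) → ℝ) : (Fin n → Bool) → ℝ :=
  fun x => (∑ y, f y * g (xadd x y)) / 2 ^ n

/-- Normalized inner product `⟨f,g⟩ = 2^{-n} ∑_x f(x) g(x)`. -/
noncomputable def inp {n : ℕ} (f g : (Fin n → Bool) → ℝ) : ℝ := (∑ x, f x * g x) / 2 ^ n

/-- The all-zeros vector. -/
def zeroV (n : ℕ) : Fin n → Bool := fun _ => false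

/-- Krawtchouk polynomial value `K_s(j)` (parameter `n`), at integer points. -/
noncomputable def kraw (n s j : ℕ) : ℝ :=
  ∑ k ∈ Finset.range (s + 1),
    (-1 : ℝ) ^ k * (j.choose k : ℝ) * ((n - j).choose (s - k) : ℝ)

/-- Generalized binomial coefficient `C(x,k)` for real `x`. -/
noncomputable def rchoose (x : ℝ) (k : ℕ) : ℝ :=
  (∏ i ∈ Finset.range k, (x - i)) / (k.factorial : ℝ)

/-- Krawtchouk polynomial `K_m` (parameter `n`) as a function of a real variable. -/
noncomputable def krawR (n m : ℕ) (x : ℝ) : ℝ :=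
  ∑ k ∈ Finset.range (m + 1),
    (-1 : ℝ) ^ k * rchoose x k * rchoose ((n : ℝ) - x) (m - k)

/-- Symmetrization operator: average over the Hamming sphere of the same weight. -/
noncomputable def symm {n : ℕ} (f : (Fin n → Bool) → ℝ) : (Fin n → Bool) → ℝ :=
  fun x => (∑ y ∈ univ.filter (fun y => wt y = wt x), f y) /
    ((univ.filter (fun y : Fin n → Bool => wt y = wt x)).card : ℝ)

/-- Binary entropy function. -/
noncomputable def binH (x : ℝ) : ℝ :=
  x * Real.logb 2 (1 / x) + (1 - x) * Real.logb 2 (1 / (1 - x))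

lemma W_prod {n} (S x : Fin n → Bool) :
    W S x = ∏ i, (if S i = true ∧ x i = true then (-1:ℝ) else 1) := by
  rw [W, ← Finset.prod_const, Finset.prod_filter]

lemma W_symm {n} (S x : Fin n → Bool) : W S x = W x S := by
  rw [W_prod, W_prod]
  exact Finset.prod_congr rfl fun i _ => if_congr (and_comm) rfl rfl

lemma W_mul_right {n} (S x y : Fin n → Bool) : W S x * W S y = W S (xadd x y) := by
  rw [W_prod, W_prod, W_prod, ← Finset.prod_mul_distrib]
  refine Finset.prod_congr rfl fun i _ => ?_
  cases hS : S i <;> cases hx : x i <;> cases hy : y i <;> simp [xadd, hS, hx, hy]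

lemma xadd_xadd {n} (x y : Fin n → Bool) : xadd (xadd x y) y = x := by
  funext i; cases hx : x i <;> cases hy : y i <;> simp [xadd, hx, hy]

lemma xadd_eq_zero {n} (x y : Fin n → Bool) : xadd x y = zeroV n ↔ x = y := by
  constructor
  · intro h
    funext i
    have := congrFun h i
    cases hx : x i <;> cases hy : y i <;> simp_all [xadd, zeroV]
  · rintro rfl; funext i; cases hx : x i <;> simp [xadd, zeroV, hx]

lemma sum_W {n} (S : Fin n → Bool) :
    ∑ x, W S x = if S = zeroV n then (2:ℝ)^n else 0 := by
  split_ifs with h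
  · subst h
    have : ∀ x : Fin n → Bool, W (zeroV n) x = 1 := by
      intro x; rw [W_prod]
      exact Finset.prod_eq_one fun i _ => by simp [zeroV]
    simp only [this, Finset.sum_const, nsmul_eq_mul, mul_one]
    simp [Fintype.card_pi]
  · obtain ⟨i, hi⟩ : ∃ i, S i = true := by
      by_contra hc
      push_neg at hc
      exact h (funext fun i => by simpa [zeroV] using hc i)
    apply Finset.sum_ninvolution (fun x => Function.update x i (!x i))
    · intro x
      have hkey : W S (Function.update x i (!x i)) = - W S x := by
        rw [W_prod, W_prod, Finset.prod_eq_mul_prod_sdiff_singleton_of_mem (Finset.mem_univ i),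
          Finset.prod_eq_mul_prod_sdiff_singleton_of_mem (Finset.mem_univ i)]
        have hrest : ∀ j ∈ (univ : Finset (Fin n)) \ {i},
            (if S j = true ∧ Function.update x i (!x i) j = true then (-1:ℝ) else 1)
              = (if S j = true ∧ x j = true then (-1:ℝ) else 1) := by
          intro j hj
          have hji : j ≠ i := Finset.notMem_singleton.mp (Finset.mem_sdiff.mp hj).2
          rw [Function.update_of_ne hji]
        rw [Finset.prod_congr rfl hrest]
        have hfac : (if S i = true ∧ Function.update x i (!x i) i = true then (-1:ℝ) else 1)
            = -(if S i = true ∧ x i = true then (-1:ℝ) else 1) := by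
          rw [Function.update_self]
          cases hx : x i <;> simp [hi, hx]
        rw [hfac]; ring
      rw [hkey]; ring
    · intro x hne heq
      have := congrFun heq i
      simp only [Function.update_self] at this
      exact (Bool.not_ne_self (x i)) this
    · exact fun x => Finset.mem_univ _
    · intro x
      funext j
      by_cases hji : j = i
      · subst hji
        simp [Function.update_self]
      · simp [Function.update_of_ne hji]

lemma sum_W_pair {n} (x y : Fin n → Bool) :
    ∑ S, W S x * W S y = if x = y then (2:ℝ)^n else 0 := by
  have h1 : ∀ S : Fin n → Bool, W S x * W S y = W (xadd x y) S := by
    intro S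
    rw [W_mul_right, W_symm]
  rw [Finset.sum_congr rfl fun S _ => h1 S, sum_W]
  exact if_congr (xadd_eq_zero x y) rfl rfl

lemma plancherel {n} (u v : (Fin n → Bool) → ℝ) :
    ∑ S, ft u S * ft v S = inp u v := by
  have hpos : (0:ℝ) < 2 ^ n := by positivity
  have h1 : ∀ S : Fin n → Bool,
      ft u S * ft v S = (∑ x, ∑ y, u x * v y * (W S x * W S y)) / (2^n * 2^n) := by
    intro S
    rw [ft, ft, div_mul_div_comm, Finset.sum_mul_sum]
    congr 1
    exact Finset.sum_congr rfl fun x _ => Finset.sum_congr rfl fun y _ => by ring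
  rw [Finset.sum_congr rfl fun S _ => h1 S, ← Finset.sum_div]
  rw [Finset.sum_comm]
  have h2 : ∀ x : Fin n → Bool,
      ∑ S : Fin n → Bool, ∑ y, u x * v y * (W S x * W S y) = u x * v x * 2^n := by
    intro x
    rw [Finset.sum_comm]
    have h3 : ∀ y : Fin n → Bool,
        ∑ S : Fin n → Bool, u x * v y * (W S x * W S y)
          = u x * v y * (if x = y then (2:ℝ)^n else 0) := by
      intro y
      rw [← Finset.mul_sum, sum_W_pair]
    rw [Finset.sum_congr rfl fun y _ => h3 y]
    simp only [mul_ite, mul_zero, Finset.sum_ite_eq, Finset.mem_univ, if_true]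
  rw [Finset.sum_congr rfl fun x _ => h2 x, inp]
  rw [← Finset.sum_mul]
  field_simp

lemma ft_conv {n} (g f : (Fin n → Bool) → ℝ) (S : Fin n → Bool) :
    ft (conv g f) S = ft g S * ft f S := by
  have h1 : ∀ y : Fin n → Bool, ∑ x, f (xadd x y) * W S x = (∑ z, f z * W S z) * W S y := by
    intro y
    have hbij : Function.Bijective (fun z : Fin n → Bool => xadd z y) :=
      Function.Involutive.bijective (fun z => xadd_xadd z y)
    rw [← Fintype.sum_bijective _ hbij (fun z => f z * W S z * W S y)
      (fun x => f (xadd x y) * W S x) (fun z => by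
        show f z * W S z * W S y = f (xadd (xadd z y) y) * W S (xadd z y)
        rw [xadd_xadd, ← W_mul_right]; ring)]
    rw [Finset.sum_mul]
  have key : ∑ x, conv g f x * W S x = (∑ y, g y * W S y) * (∑ z, f z * W S z) / 2 ^ n := by
    simp only [conv, div_mul_eq_mul_div, ← Finset.sum_div]
    congr 1
    calc ∑ x, (∑ y, g y * f (xadd x y)) * W S x
        = ∑ x, ∑ y, g y * f (xadd x y) * W S x := by
          refine Finset.sum_congr rfl fun x _ => ?_; rw [Finset.sum_mul]
      _ = ∑ y, ∑ x, g y * f (xadd x y) * W S x := Finset.sum_comm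
      _ = ∑ y, g y * ((∑ z, f z * W S z) * W S y) := by
          refine Finset.sum_congr rfl fun y _ => ?_
          rw [← h1 y, Finset.mul_sum]
          exact Finset.sum_congr rfl fun x _ => by ring
      _ = (∑ y, g y * W S y) * ∑ z, f z * W S z := by
          rw [Finset.sum_mul]
          exact Finset.sum_congr rfl fun y _ => by ring
  rw [ft, key, ft, ft]
  field_simp

lemma wt_le {n} (x : Fin n → Bool) : wt x ≤ n := by
  have := Finset.card_filter_le (univ : Finset (Fin n)) (fun i => x i = true)
  simpa [wt] using this

lemma sum_by_weight {n} (F : (Fin n → Bool) → ℝ) :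
    ∑ x, F x = ∑ i ∈ Finset.range (n+1), ∑ x ∈ univ.filter (fun x => wt x = i), F x :=
  (Finset.sum_fiberwise_of_maps_to
    (fun x _ => Finset.mem_range.mpr (Nat.lt_succ_of_le (wt_le x))) F).symm

lemma exists_wt (n d : ℕ) (hd : d ≤ n) : ∃ S : Fin n → Bool, wt S = d := by
  refine ⟨fun i => decide ((i:ℕ) < d), ?_⟩
  have h1 : (univ.filter fun i : Fin n => (decide ((i:ℕ) < d)) = true)
      = (univ.filter fun i : Fin n => ((i:ℕ) < d)) := by
    apply Finset.filter_congr
    intro i _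
    simp
  rw [wt, h1, ← Finset.card_image_of_injective _ Fin.val_injective]
  have h2 : Finset.image Fin.val (univ.filter fun i : Fin n => ((i:ℕ) < d))
      = Finset.range d := by
    ext a
    simp only [Finset.mem_image, Finset.mem_filter, Finset.mem_range, Finset.mem_univ, true_and]
    constructor
    · rintro ⟨i, hi, rfl⟩; exact hi
    · intro ha; exact ⟨⟨a, lt_of_lt_of_le ha hd⟩, ha, rfl⟩
  rw [h2, Finset.card_range]

theorem probability_vector_and_expectation (n d : ℕ) (hd : d ≤ n)
    (f g : (Fin n → Bool) → ℝ) (τ ρ : ℝ) (lam P : ℕ → ℝ)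
    (hf : ∀ x, 0 ≤ f x) (hf_ne : f ≠ 0)
    (hgsym : ∀ x y : Fin n → Bool, wt x = wt y → g x = g y)
    (hτρ : ρ < τ)
    (h1 : ∀ x, τ * f x ≤ conv g f x)
    (h2 : ∀ S : Fin n → Bool, d ≤ wt S → ft g S ≤ ρ)
    (hlam : ∀ i, lam i =
      (∑ x ∈ univ.filter (fun x : Fin n → Bool => wt x = i), (ft f x) ^ 2) / inp f f)
    (hP : ∀ y : Fin n → Bool, ft g y = P (wt y)) :
    (∀ i, 0 ≤ lam i) ∧ (∑ i ∈ Finset.range (n + 1), lam i) = 1 ∧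
    P d ≤ ρ ∧ ρ < τ ∧ τ ≤ ∑ i ∈ Finset.range (n + 1), lam i * P i := by
  have hpow : (0:ℝ) < 2 ^ n := by positivity
  -- positivity of inner product
  have ipos : 0 < inp f f := by
    obtain ⟨x0, hx0⟩ : ∃ x, f x ≠ 0 := by
      by_contra hc
      push_neg at hc
      exact hf_ne (funext fun x => hc x)
    have : 0 < ∑ x, f x * f x :=
      Finset.sum_pos' (fun x _ => mul_self_nonneg (f x))
        ⟨x0, Finset.mem_univ x0, mul_pos ((hf x0).lt_of_ne (Ne.symm hx0))
          ((hf x0).lt_of_ne (Ne.symm hx0))⟩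
    exact div_pos this hpow
  -- Parseval grouped by weight
  have parseval : ∑ i ∈ Finset.range (n+1),
      (∑ x ∈ univ.filter (fun x : Fin n → Bool => wt x = i), (ft f x) ^ 2) = inp f f := by
    rw [← sum_by_weight (fun S => (ft f S)^2), ← plancherel f f]
    exact Finset.sum_congr rfl fun S _ => pow_two (ft f S)
  refine ⟨?_, ?_, ?_, hτρ, ?_⟩
  · intro i
    rw [hlam i]
    exact div_nonneg (Finset.sum_nonneg fun x _ => sq_nonneg _) ipos.le
  · rw [Finset.sum_congr rfl fun i _ => hlam i, ← Finset.sum_div, parseval,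
      div_self ipos.ne']
  · obtain ⟨S, hS⟩ := exists_wt n d hd
    have := h2 S (le_of_eq hS.symm)
    rwa [hP S, hS] at this
  · -- main inequality
    have hA : τ * inp f f ≤ inp (conv g f) f := by
      have hsum : τ * (∑ x, f x * f x) ≤ ∑ x, conv g f x * f x := by
        rw [Finset.mul_sum]
        refine Finset.sum_le_sum fun x _ => ?_
        have := mul_le_mul_of_nonneg_right (h1 x) (hf x)
        nlinarith
      rw [inp, inp, ← mul_div_assoc]
      gcongr
    have hB : inp (conv g f) f = ∑ i ∈ Finset.range (n+1),
        P i * (∑ x ∈ univ.filter (fun x : Fin n → Bool => wt x = i), (ft f x) ^ 2) := by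
      have hBsum : (∑ S : Fin n → Bool, ft (conv g f) S * ft f S)
          = ∑ S : Fin n → Bool, ft g S * ft f S * ft f S :=
        Finset.sum_congr rfl fun S _ => by rw [ft_conv]
      rw [← plancherel (conv g f) f, hBsum,
        sum_by_weight (fun S => ft g S * ft f S * ft f S)]
      refine Finset.sum_congr rfl fun i hi => ?_
      rw [Finset.mul_sum]
      refine Finset.sum_congr rfl fun x hx => ?_
      have hwx : wt x = i := (Finset.mem_filter.mp hx).2
      rw [hP x, hwx]
      ring
    have hfin : τ * inp f f ≤ ∑ i ∈ Finset.range (n+1),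
        P i * (∑ x ∈ univ.filter (fun x : Fin n → Bool => wt x = i), (ft f x) ^ 2) := by
      rw [← hB]; exact hA
    have : ∑ i ∈ Finset.range (n + 1), lam i * P i
        = (∑ i ∈ Finset.range (n+1),
          P i * (∑ x ∈ univ.filter (fun x : Fin n → Bool => wt x = i), (ft f x) ^ 2))
          / inp f f := by
      rw [Finset.sum_div]
      refine Finset.sum_congr rfl fun i _ => ?_
      rw [hlam i]
      field_simp
    rw [this, le_div_iff₀ ipos]
    linarith

end Cube
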